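/- For every non-negative integer n, Δ₁(2n+1) ≡ 0 (mod 3). -/

import Mathlib

open PowerSeries Finset

section Aux

variable {R : Type*} [CommRing R]

/-- A power series all of whose odd coefficients vanish. -/
def EvenS (f : R⟦X⟧) : Prop := ∀ m : ℕ, Odd m → PowerSeries.coeff m f = 0

lemma evenS_one : EvenS (1 : R⟦X⟧) := by
  intro m hm
  have hm0 : m ≠ 0 := by rintro rfl; exact absurd (Nat.odd_iff.mp hm) (by omega)
  rw [coeff_one, if_neg hm0]

lemma evenS_sub {f g : R⟦X⟧} (hf : EvenS f) (hg : EvenS g) : EvenS (f - g) := by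
  intro m hm; rw [map_sub, hf m hm, hg m hm, sub_zero]

lemma evenS_X_pow {k : ℕ} (hk : Even k) : EvenS ((X : R⟦X⟧) ^ k) := by
  intro m hm
  have : m ≠ k := by
    rintro rfl
    rw [Nat.odd_iff] at hm
    rw [Nat.even_iff] at hk
    omega
  rw [coeff_X_pow, if_neg this]

lemma evenS_mul {f g : R⟦X⟧} (hf : EvenS f) (hg : EvenS g) : EvenS (f * g) := by
  intro m hm
  rw [coeff_mul]
  refine Finset.sum_eq_zero fun p hp => ?_
  rw [Finset.HasAntidiagonal.mem_antidiagonal] at hp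
  rcases Nat.even_or_odd p.1 with h1 | h1
  · have h2 : Odd p.2 := by
      rw [Nat.odd_iff] at hm ⊢
      rw [Nat.even_iff] at h1
      omega
    rw [hg _ h2, mul_zero]
  · rw [hf _ h1, zero_mul]

lemma evenS_prod {ι : Type*} (s : Finset ι) (f : ι → R⟦X⟧)
    (h : ∀ i ∈ s, EvenS (f i)) : EvenS (∏ i ∈ s, f i) :=
  Finset.prod_induction f EvenS (fun _ _ => evenS_mul) evenS_one h

/-- Multiplying by a factor `g ≡ 1 (mod X^e)` does not change coefficients below `e`. -/
lemma coeff_mul_extend {d e : ℕ} (hd : d < e) (B g : R⟦X⟧)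
    (hg : (X : R⟦X⟧) ^ e ∣ (g - 1)) : PowerSeries.coeff d (B * g) = PowerSeries.coeff d B := by
  have h1 : B * g = B + B * (g - 1) := by ring
  have h2 : (X : R⟦X⟧) ^ e ∣ B * (g - 1) := Dvd.dvd.mul_left hg B
  rw [h1, map_add, (X_pow_dvd_iff.mp h2) d hd, add_zero]

lemma coeff_mul_prod_extend (d : ℕ) (B : R⟦X⟧) (g : ℕ → R⟦X⟧)
    (hg : ∀ m : ℕ, (X : R⟦X⟧) ^ (m + 1) ∣ (g m - 1)) :
    ∀ N : ℕ, d + 1 ≤ N →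
      PowerSeries.coeff d (B * ∏ m ∈ range N, g m) =
        PowerSeries.coeff d (B * ∏ m ∈ range (d + 1), g m) := by
  intro N
  induction N with
  | zero => omega
  | succ N ih =>
    intro hN
    rcases Nat.lt_or_ge (d + 1) (N + 1) with h | h
    · rw [prod_range_succ, ← mul_assoc, coeff_mul_extend (by omega) _ _ (hg N), ih (by omega)]
    · have : N + 1 = d + 1 := by omega
      rw [this]

/-- Cancel a unit coefficientwise up to degree `D`. -/
lemma coeff_eq_of_mul_unit {D : ℕ} {A B u : R⟦X⟧} (hu : IsUnit u)
    (h : ∀ d ≤ D, PowerSeries.coeff d (A * u) = PowerSeries.coeff d (B * u)) :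
    ∀ d ≤ D, PowerSeries.coeff d A = PowerSeries.coeff d B := by
  obtain ⟨U, rfl⟩ := hu
  have hdvd : (X : R⟦X⟧) ^ (D + 1) ∣ (A - B) * (U : R⟦X⟧) := by
    rw [X_pow_dvd_iff]
    intro m hm
    rw [sub_mul, map_sub, h m (by omega), sub_self]
  have hAB : (X : R⟦X⟧) ^ (D + 1) ∣ A - B := by
    have h2 : ((A - B) * (U : R⟦X⟧)) * ((U⁻¹ : R⟦X⟧ˣ) : R⟦X⟧) = A - B := by
      rw [mul_assoc, Units.mul_inv, mul_one]
    rw [← h2]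
    exact hdvd.mul_right _
  intro d hd
  have := (X_pow_dvd_iff.mp hAB) d (by omega)
  rw [map_sub, sub_eq_zero] at this
  exact this

/-- If `g` is an even series with constant coefficient `1` and the odd coefficients of
`F * g` up to `D` vanish, then the odd coefficients of `F` up to `D` vanish. -/
lemma odd_coeff_zero_of (D : ℕ) (F g : R⟦X⟧) (hg : EvenS g)
    (hg0 : PowerSeries.constantCoeff g = 1)
    (h : ∀ d ≤ D, Odd d → PowerSeries.coeff d (F * g) = 0) :
    ∀ d ≤ D, Odd d → PowerSeries.coeff d F = 0 := by
  intro d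
  induction d using Nat.strong_induction_on with
  | _ d ih =>
    intro hd hodd
    have h1 : F * g = F + F * (g - 1) := by ring
    have hz : PowerSeries.coeff d (F * (g - 1)) = 0 := by
      rw [coeff_mul]
      refine Finset.sum_eq_zero fun p hp => ?_
      rw [Finset.HasAntidiagonal.mem_antidiagonal] at hp
      rcases Nat.even_or_odd p.2 with h2 | h2
      · rcases Nat.eq_zero_or_pos p.2 with h0 | h0
        · rw [h0, map_sub, coeff_zero_eq_constantCoeff, hg0, map_one, sub_self, mul_zero]
        · have hi : Odd p.1 := by
            rw [Nat.odd_iff] at hodd ⊢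
            rw [Nat.even_iff] at h2
            omega
          rw [ih p.1 (by omega) (by omega) hi, zero_mul]
      · have hp2 : p.2 ≠ 0 := by rintro h0; rw [h0] at h2; exact absurd (Nat.odd_iff.mp h2) (by omega)
        rw [map_sub, hg _ h2, coeff_one, if_neg hp2, sub_zero, mul_zero]
    have := h d hd hodd
    rw [h1, map_add, hz, add_zero] at this
    exact this

end Aux

/-- Andrews–Paule: `Δ₁(2n+1) ≡ 0 (mod 3)`, where `Δ₁` counts broken 1-diamond
partitions, i.e. `∑ Δ₁(n) qⁿ = ∏_{n≥1} (1-q^{2n})(1-q^{3n})/((1-qⁿ)³(1-q^{6n}))`.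
The generating-function identity is encoded coefficientwise: the coefficient of `q^d`
only depends on the factors with index `n ≤ d`, so the infinite products are replaced
by the finite products of their factors for `n = 1, …, d+1` (cross-multiplied to avoid
inverses). -/
theorem broken1diamond_mod_three (Δ₁ : ℕ → ℕ)
    (hΔ : ∀ d : ℕ,
      (PowerSeries.coeff d) ((PowerSeries.mk fun n => (Δ₁ n : ℤ)) *
        ∏ n ∈ range (d + 1), ((1 - (X : ℤ⟦X⟧) ^ (n + 1)) ^ 3 * (1 - X ^ (6 * (n + 1))))) =
      (PowerSeries.coeff d)
        (∏ n ∈ range (d + 1), ((1 - (X : ℤ⟦X⟧) ^ (2 * (n + 1))) * (1 - X ^ (3 * (n + 1)))))) :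
    ∀ n : ℕ, 3 ∣ Δ₁ (2 * n + 1) := by
  intro n
  let R := ZMod 3
  set D : ℕ := 2 * n + 1 with hD
  set N : ℕ := D + 1 with hN
  set F : R⟦X⟧ := PowerSeries.map (Int.castRingHom R) (PowerSeries.mk fun k => (Δ₁ k : ℤ))
    with hF
  -- 3 = 0 in R⟦X⟧
  have h3 : (3 : R⟦X⟧) = 0 := by
    have h : (3 : R⟦X⟧) = PowerSeries.C (3 : R) := (map_ofNat (PowerSeries.C) 3).symm
    rw [h, show (3 : R) = 0 from rfl, map_zero]
  -- Frobenius: (1 - X^k)^3 = 1 - X^(3k)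
  have hfrob : ∀ k : ℕ, (1 - (X : R⟦X⟧) ^ k) ^ 3 = 1 - X ^ (3 * k) := by
    intro k
    have hr : (1 - (X : R⟦X⟧) ^ k) ^ 3
        = 1 - X ^ (3 * k) - 3 * (X ^ k - (X ^ k) ^ 2) := by
      rw [mul_comm 3 k, pow_mul]
      ring
    rw [hr, h3]
    ring
  -- the mapped hypothesis
  have hmap : ∀ d : ℕ,
      PowerSeries.coeff d (F *
        ∏ m ∈ range (d + 1), ((1 - (X : R⟦X⟧) ^ (3 * (m + 1))) * (1 - X ^ (6 * (m + 1))))) =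
      PowerSeries.coeff d
        (∏ m ∈ range (d + 1), ((1 - (X : R⟦X⟧) ^ (2 * (m + 1))) * (1 - X ^ (3 * (m + 1))))) := by
    intro d
    have h0 : PowerSeries.coeff d (PowerSeries.map (Int.castRingHom R)
          ((PowerSeries.mk fun k => (Δ₁ k : ℤ)) *
            ∏ m ∈ range (d + 1), ((1 - (X : ℤ⟦X⟧) ^ (m + 1)) ^ 3 * (1 - X ^ (6 * (m + 1)))))) =
        PowerSeries.coeff d (PowerSeries.map (Int.castRingHom R)
          (∏ m ∈ range (d + 1), ((1 - (X : ℤ⟦X⟧) ^ (2 * (m + 1))) * (1 - X ^ (3 * (m + 1)))))) := by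
      rw [PowerSeries.coeff_map, PowerSeries.coeff_map]
      exact congrArg _ (hΔ d)
    simp only [map_mul, map_prod, map_sub, map_pow, map_one, PowerSeries.map_X] at h0
    simp only [hfrob] at h0
    exact h0
  -- the three truncated products with N factors
  set P2 : R⟦X⟧ := ∏ m ∈ range N, (1 - X ^ (2 * (m + 1))) with hP2
  set P3 : R⟦X⟧ := ∏ m ∈ range N, (1 - X ^ (3 * (m + 1))) with hP3
  set P6 : R⟦X⟧ := ∏ m ∈ range N, (1 - X ^ (6 * (m + 1))) with hP6
  have hdvdfac : ∀ (a b : ℕ) (m : ℕ), 0 < a → 0 < b →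
      (X : R⟦X⟧) ^ (m + 1) ∣ ((1 - X ^ (a * (m + 1))) * (1 - X ^ (b * (m + 1))) - 1) := by
    intro a b m ha hb
    have h : (1 - (X : R⟦X⟧) ^ (a * (m + 1))) * (1 - X ^ (b * (m + 1))) - 1
        = X ^ (a * (m + 1)) * X ^ (b * (m + 1)) - X ^ (a * (m + 1)) - X ^ (b * (m + 1)) := by
      ring
    rw [h]
    have d1 : (X : R⟦X⟧) ^ (m + 1) ∣ X ^ (a * (m + 1)) := pow_dvd_pow _ (by nlinarith)
    have d2 : (X : R⟦X⟧) ^ (m + 1) ∣ X ^ (b * (m + 1)) := pow_dvd_pow _ (by nlinarith)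
    exact ((d1.mul_right _).sub d1).sub d2
  -- Step 1: coefficientwise identity with common truncation
  have h1 : ∀ d ≤ D, PowerSeries.coeff d (F * P6 * P3) = PowerSeries.coeff d (P2 * P3) := by
    intro d hd
    have hA := coeff_mul_prod_extend (R := R) d F
      (fun m => (1 - X ^ (3 * (m + 1))) * (1 - X ^ (6 * (m + 1))))
      (fun m => hdvdfac 3 6 m (by norm_num) (by norm_num)) N (by omega)
    have hB := coeff_mul_prod_extend (R := R) d 1
      (fun m => (1 - X ^ (2 * (m + 1))) * (1 - X ^ (3 * (m + 1))))
      (fun m => hdvdfac 2 3 m (by norm_num) (by norm_num)) N (by omega)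
    rw [one_mul, one_mul] at hB
    have hprod3 : (∏ m ∈ range N, ((1 - (X : R⟦X⟧) ^ (3 * (m + 1))) * (1 - X ^ (6 * (m + 1)))))
        = P3 * P6 := by rw [hP3, hP6, ← Finset.prod_mul_distrib]
    have hprod2 : (∏ m ∈ range N, ((1 - (X : R⟦X⟧) ^ (2 * (m + 1))) * (1 - X ^ (3 * (m + 1)))))
        = P2 * P3 := by rw [hP2, hP3, ← Finset.prod_mul_distrib]
    calc PowerSeries.coeff d (F * P6 * P3)
        = PowerSeries.coeff d (F * (P3 * P6)) := by rw [mul_assoc, mul_comm P6]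
      _ = PowerSeries.coeff d (F *
            ∏ m ∈ range N, ((1 - (X : R⟦X⟧) ^ (3 * (m + 1))) * (1 - X ^ (6 * (m + 1))))) := by
            rw [hprod3]
      _ = PowerSeries.coeff d (F *
            ∏ m ∈ range (d + 1),
              ((1 - (X : R⟦X⟧) ^ (3 * (m + 1))) * (1 - X ^ (6 * (m + 1))))) := hA
      _ = PowerSeries.coeff d
            (∏ m ∈ range (d + 1),
              ((1 - (X : R⟦X⟧) ^ (2 * (m + 1))) * (1 - X ^ (3 * (m + 1))))) := hmap d
      _ = PowerSeries.coeff d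
            (∏ m ∈ range N, ((1 - (X : R⟦X⟧) ^ (2 * (m + 1))) * (1 - X ^ (3 * (m + 1))))) :=
            hB.symm
      _ = PowerSeries.coeff d (P2 * P3) := by rw [hprod2]
  -- P3 is a unit
  have hP3unit : IsUnit P3 := by
    rw [PowerSeries.isUnit_iff_constantCoeff]
    have : PowerSeries.constantCoeff P3 = 1 := by
      rw [hP3, map_prod]
      refine Finset.prod_eq_one fun m _ => ?_
      rw [map_sub, map_one, map_pow, PowerSeries.constantCoeff_X, zero_pow (by omega), sub_zero]
    rw [this]
    exact isUnit_one
  -- Step 2: cancel P3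
  have h2 : ∀ d ≤ D, PowerSeries.coeff d (F * P6) = PowerSeries.coeff d P2 :=
    coeff_eq_of_mul_unit hP3unit h1
  -- Step 3: P2 and P6 are even series
  have hevenP2 : EvenS P2 := by
    refine evenS_prod _ _ fun m _ => evenS_sub evenS_one (evenS_X_pow ⟨m + 1, by ring⟩)
  have hevenP6 : EvenS P6 := by
    refine evenS_prod _ _ fun m _ => evenS_sub evenS_one (evenS_X_pow ⟨3 * (m + 1), by ring⟩)
  have h4 : ∀ d ≤ D, Odd d → PowerSeries.coeff d (F * P6) = 0 := by
    intro d hd hodd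
    rw [h2 d hd]
    exact hevenP2 d hodd
  have hP6const : PowerSeries.constantCoeff P6 = 1 := by
    rw [hP6, map_prod]
    refine Finset.prod_eq_one fun m _ => ?_
    rw [map_sub, map_one, map_pow, PowerSeries.constantCoeff_X, zero_pow (by omega), sub_zero]
  -- Step 4: odd coefficients of F up to D vanish
  have h5 : PowerSeries.coeff D F = 0 :=
    odd_coeff_zero_of D F P6 hevenP6 hP6const h4 D le_rfl ⟨n, by omega⟩
  -- conclude
  rw [hF, PowerSeries.coeff_map, PowerSeries.coeff_mk] at h5
  have h6 : ((Δ₁ D : ℕ) : ZMod 3) = 0 := by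
    rw [← h5]; rfl
  exact (ZMod.natCast_eq_zero_iff _ _).mp h6
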